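/- Suppose w' is obtained from w over Σ = {a,b,c} by a strong (2·t) transformation with associated ordered pairs (p_i, q_i), 1 ≤ i ≤ 2t (where p_i = ∓1 records whether the i-th swapped pair is ab or ba, and q_i = p_i · (number of c's to the right of it in w)). Then the transformation is reducible (i.e., factors as a strong (2·t₁) followed by a strong (2·t₂) transformation with t₁ + t₂ = t, t₁, t₂ > 0) if and only if there exists a nonempty proper subset I ⊊ {1, …, 2t} with Σ_{i∈I} p_i = Σ_{i∈I} q_i = 0. -/

import Mathlib

/-- The number of occurrences of `v` as a scattered subword (subsequence) of `w`. -/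
def lcount (v w : List (Fin 3)) : ℕ := w.sublists.count v

/-- The letters of the ternary alphabet `Σ = {a, b, c}`. -/
def A : Fin 3 := 0
def B : Fin 3 := 1
def C : Fin 3 := 2

/-- `w` and `w'` are M-equivalent with respect to the ordered alphabet `{x < y < z}`:
they have the same Parikh matrix, equivalently the same scattered-subword counts for
`x, y, z, xy, yz, xyz`. -/
def Mequiv (x y z : Fin 3) (w w' : List (Fin 3)) : Prop :=
  lcount [x] w = lcount [x] w' ∧ lcount [y] w = lcount [y] w' ∧
  lcount [z] w = lcount [z] w' ∧ lcount [x, y] w = lcount [x, y] w' ∧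
  lcount [y, z] w = lcount [y, z] w' ∧ lcount [x, y, z] w = lcount [x, y, z] w'

/-- Strong M-equivalence: M-equivalence with respect to every ordering of `{a, b, c}`. -/
def StrongME (w w' : List (Fin 3)) : Prop :=
  ∀ x y z : Fin 3, [x, y, z].Perm [A, B, C] → Mequiv x y z w w'

/-- `t`-fold repetition of the word `l`. -/
def lpow (l : List (Fin 3)) (n : ℕ) : List (Fin 3) := (List.replicate n l).flatten



namespace SwAux

abbrev Seg := List (Fin 3)

def blk (b : Bool) : Seg := if b then [A, B] else [B, A]

def sw : List (Seg × Bool) → Seg → Seg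
  | [], e => e
  | (u, b) :: L, e => u ++ blk b ++ sw L e

def flipL (L : List (Seg × Bool)) : List (Seg × Bool) := L.map (fun p => (p.1, !p.2))

def startsL : List (Seg × Bool) → List ℕ
  | [] => []
  | (u, _) :: L => u.length :: (startsL L).map (· + (u.length + 2))

def toL (n : ℕ) (v : Fin (n + 1) → Seg) (ν : Fin n → Bool) : List (Seg × Bool) :=
  List.ofFn (fun i : Fin n => (v i.castSucc, ν i))

@[simp] lemma length_toL (n v ν) : (toL n v ν).length = n := by simp [toL]

@[simp] lemma length_startsL (L : List (Seg × Bool)) : (startsL L).length = L.length := by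
  induction L with
  | nil => rfl
  | cons p L ih => cases p; simp [startsL, ih]

@[simp] lemma length_blk (b : Bool) : (blk b).length = 2 := by cases b <;> rfl

lemma toL_succ (n : ℕ) (v : Fin (n + 2) → Seg) (ν : Fin (n + 1) → Bool) :
    toL (n + 1) v ν = (v 0, ν 0) :: toL n (fun i => v i.succ) (fun i => ν i.succ) := by
  simp only [toL, List.ofFn_succ]
  rfl

lemma sw_eq (n : ℕ) (v : Fin (n + 1) → Seg) (ν : Fin n → Bool) :
    sw (toL n v ν) (v (Fin.last n)) =
      (List.ofFn (fun i : Fin n => v i.castSucc ++ blk (ν i))).flatten ++ v (Fin.last n) := by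
  induction n with
  | zero => simp [toL, sw]
  | succ n ih =>
    rw [toL_succ, List.ofFn_succ, sw, List.flatten_cons]
    have h := ih (fun i => v i.succ) (fun i => ν i.succ)
    have hl : v (Fin.last (n + 1)) = (fun i : Fin (n+1) => v i.succ) (Fin.last n) := by
      simp [Fin.succ_last]
    rw [hl, h]
    simp [Fin.castSucc_zero, List.append_assoc]

end SwAux
def swapWord (t : ℕ) (us : Fin (2 * t + 1) → List (Fin 3)) (μ : Fin (2 * t) → Bool) :
    List (Fin 3) :=
  (List.ofFn (fun i : Fin (2 * t) =>
    us i.castSucc ++ (if μ i then [A, B] else [B, A]))).flatten ++ us (Fin.last (2 * t))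

def rightC (t : ℕ) (us : Fin (2 * t + 1) → List (Fin 3)) (i : Fin (2 * t)) : ℤ :=
  ∑ j : Fin (2 * t + 1), if (i : ℕ) < (j : ℕ) then ((us j).count C : ℤ) else 0

namespace SwAux

lemma swapWord_eq_sw (t : ℕ) (us : Fin (2 * t + 1) → List (Fin 3)) (μ : Fin (2 * t) → Bool) :
    swapWord t us μ = sw (toL (2 * t) us μ) (us (Fin.last (2 * t))) := by
  rw [sw_eq]; rfl

lemma flipL_toL (n : ℕ) (v : Fin (n + 1) → Seg) (ν : Fin n → Bool) :
    flipL (toL n v ν) = toL n v (fun i => !(ν i)) := by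
  simp [flipL, toL, List.map_ofFn]; rfl

lemma startsL_pairwise (L : List (Seg × Bool)) :
    (startsL L).Pairwise (fun a b => a + 2 ≤ b) := by
  induction L with
  | nil => simp [startsL]
  | cons p L ih =>
    cases p with
    | mk u b =>
      rw [startsL, List.pairwise_cons]
      constructor
      · intro s hs
        obtain ⟨x, _, rfl⟩ := List.mem_map.mp hs
        omega
      · exact List.Pairwise.map _ (fun h => by omega) ih

lemma startsL_sep (L : List (Seg × Bool)) {a b : ℕ} (ha : a ∈ startsL L)
    (hb : b ∈ startsL L) (hne : a ≠ b) : a + 2 ≤ b ∨ b + 2 ≤ a := by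
  have h : (startsL L).Pairwise (fun a b => a + 2 ≤ b ∨ b + 2 ≤ a) :=
    (startsL_pairwise L).imp Or.inl
  haveI : Std.Symm (fun a b : ℕ => a + 2 ≤ b ∨ b + 2 ≤ a) := ⟨fun x y hxy => hxy.symm⟩
  exact List.Pairwise.forall h ha hb hne

lemma startsL_nodup (L : List (Seg × Bool)) : (startsL L).Nodup :=
  (startsL_pairwise L).imp (fun h => by omega)

lemma startsL_getElem_lt (L : List (Seg × Bool)) {i j : ℕ} (hij : i < j) (hj : j < (startsL L).length) :
    (startsL L)[i]'(by omega) + 2 ≤ (startsL L)[j] :=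
  List.pairwise_iff_getElem.mp (startsL_pairwise L) i j (by omega) hj hij

lemma sw_drop (L : List (Seg × Bool)) (e : Seg) (i : ℕ) (h : i < L.length) :
    (sw L e).drop ((startsL L)[i]'(by simpa using h)) =
      blk (L[i]'h).2 ++ sw (L.drop (i + 1)) e := by
  induction L generalizing i with
  | nil => simp at h
  | cons p L ih =>
    cases p with
    | mk u b =>
      cases i with
      | zero =>
        simp only [startsL, sw, List.getElem_cons_zero, List.drop_succ_cons, List.drop_zero]
        rw [List.append_assoc, List.drop_left]
      | succ i =>
        have hi : i < L.length := by simpa using h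
        simp only [startsL, sw, List.getElem_cons_succ, List.drop_succ_cons]
        rw [List.getElem_map]
        have : u ++ blk b ++ sw L e = (u ++ blk b) ++ sw L e := by simp [List.append_assoc]
        rw [this]
        have hlen : (u ++ blk b).length = u.length + 2 := by simp
        rw [show (startsL L)[i]'(by simpa using hi) + (u.length + 2)
              = (u ++ blk b).length + (startsL L)[i]'(by simpa using hi) by omega]
        rw [List.drop_length_add_append]
        exact ih i hi

end SwAux
namespace SwAux

lemma AneB : A ≠ B := by decide

@[simp] lemma countC_blk (b : Bool) : (blk b).count C = 0 := by cases b <;> decide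

lemma sw_get_start (L : List (Seg × Bool)) (e : Seg) (i : ℕ) (h : i < L.length) :
    (sw L e)[(startsL L)[i]'(by simpa using h)]? = some (if (L[i]'h).2 then A else B) := by
  have hd := sw_drop L e i h
  have : (sw L e)[(startsL L)[i]'(by simpa using h) + 0]? =
      ((sw L e).drop ((startsL L)[i]'(by simpa using h)))[0]? := by
    rw [List.getElem?_drop]
  rw [Nat.add_zero] at this
  rw [this, hd]
  cases hb : (L[i]'h).2 <;> simp [blk, hb]

lemma sw_get_start1 (L : List (Seg × Bool)) (e : Seg) (i : ℕ) (h : i < L.length) :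
    (sw L e)[(startsL L)[i]'(by simpa using h) + 1]? = some (if (L[i]'h).2 then B else A) := by
  have hd := sw_drop L e i h
  have : (sw L e)[(startsL L)[i]'(by simpa using h) + 1]? =
      ((sw L e).drop ((startsL L)[i]'(by simpa using h)))[1]? := by
    rw [List.getElem?_drop]
  rw [this, hd]
  cases hb : (L[i]'h).2 <;> simp [blk, hb]

lemma sw_countC_drop (L : List (Seg × Bool)) (e : Seg) (i : ℕ) (h : i < L.length) :
    ((sw L e).drop ((startsL L)[i]'(by simpa using h) + 2)).count C =
      (sw (L.drop (i + 1)) e).count C := by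
  have : (sw L e).drop ((startsL L)[i]'(by simpa using h) + 2) =
      ((sw L e).drop ((startsL L)[i]'(by simpa using h))).drop 2 := by
    rw [List.drop_drop]
  rw [this, sw_drop L e i h]
  have : (blk (L[i]'h).2 ++ sw (L.drop (i + 1)) e).drop 2 = sw (L.drop (i + 1)) e := by
    have h2 : (2 : ℕ) = (blk (L[i]'h).2).length := by simp
    rw [h2, List.drop_left]
  rw [this]

/-- The difference set of `sw L e` and its full flip is exactly the block positions. -/
lemma sw_diff (L : List (Seg × Bool)) (e : Seg) (m : ℕ) :
    (sw L e)[m]? ≠ (sw (flipL L) e)[m]? ↔ ∃ s ∈ startsL L, m = s ∨ m = s + 1 := by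
  induction L generalizing m with
  | nil => simp [sw, flipL, startsL]
  | cons p L ih =>
    cases p with
    | mk u b =>
      have hflip : flipL ((u, b) :: L) = (u, !b) :: flipL L := rfl
      rw [hflip]
      simp only [sw, startsL]
      rw [List.append_assoc, List.append_assoc]
      rw [List.getElem?_append (l₁ := u), List.getElem?_append (l₁ := u)]
      by_cases hm : m < u.length
      · simp only [if_pos hm]
        constructor
        · intro hc; exact absurd rfl hc
        · rintro ⟨s, hs, rfl | rfl⟩ <;>
          · rcases List.mem_cons.mp hs with rfl | hs'
            · omega
            · obtain ⟨x, _, rfl⟩ := List.mem_map.mp hs'; omega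
      · simp only [if_neg hm]
        rw [List.getElem?_append (l₁ := blk b), List.getElem?_append (l₁ := blk (!b))]
        simp only [length_blk]
        by_cases hm2 : m - u.length < 2
        · simp only [if_pos hm2]
          have hor : m = u.length ∨ m = u.length + 1 := by omega
          constructor
          · intro _
            exact ⟨u.length, List.mem_cons_self, hor⟩
          · intro _
            rcases hor with rfl | rfl
            · have : u.length - u.length = 0 := by omega
              rw [this]
              cases b <;> simp [blk] <;> decide
            · have : u.length + 1 - u.length = 1 := by omega
              rw [this]
              cases b <;> simp [blk] <;> decide
        · simp only [if_neg hm2]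
          have harith : m - u.length - 2 = m - (u.length + 2) := by omega
          rw [harith, ih]
          constructor
          · rintro ⟨s, hs, h1 | h1⟩
            · exact ⟨s + (u.length + 2), List.mem_cons_of_mem _ (List.mem_map_of_mem hs),
                Or.inl (by omega)⟩
            · exact ⟨s + (u.length + 2), List.mem_cons_of_mem _ (List.mem_map_of_mem hs),
                Or.inr (by omega)⟩
          · rintro ⟨s, hs, h1 | h1⟩ <;>
            · rcases List.mem_cons.mp hs with rfl | hs'
              · omega
              · obtain ⟨x, hx, rfl⟩ := List.mem_map.mp hs'
                exact ⟨x, hx, by omega⟩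

end SwAux
namespace SwAux

lemma countC_sw (M : List (Seg × Bool)) (e : Seg) :
    (sw M e).count C = (M.map (fun p => p.1.count C)).sum + e.count C := by
  induction M with
  | nil => simp [sw]
  | cons p M ih =>
    cases p with
    | mk u b => simp [sw, List.count_append, ih]; omega

lemma sum_drop_ofFn (n : ℕ) (g : Fin n → ℕ) (k : ℕ) :
    ((List.ofFn g).drop k).sum = ∑ j : Fin n, if k ≤ (j : ℕ) then g j else 0 := by
  induction n generalizing k with
  | zero => simp
  | succ n ih =>
    rw [List.ofFn_succ]
    cases k with
    | zero =>
      simp only [List.drop_zero, List.sum_cons, List.sum_ofFn]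
      rw [← Fin.sum_univ_succ (f := fun j => g j)]
      simp
    | succ k =>
      rw [List.drop_succ_cons, ih (fun j => g j.succ) k, Fin.sum_univ_succ]
      simp only [Fin.val_zero, Fin.val_succ]
      show _ = (if k + 1 ≤ 0 then g 0 else 0) + _
      rw [if_neg (by omega)]
      rw [zero_add]
      apply Finset.sum_congr rfl
      intro j _
      congr 1
      simp only [eq_iff_iff]
      omega

lemma rightC_gen (n : ℕ) (v : Fin (n + 1) → Seg) (ν : Fin n → Bool) (i : Fin n) :
    (∑ j : Fin (n + 1), if (i : ℕ) < (j : ℕ) then (v j).count C else 0) =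
      (sw ((toL n v ν).drop ((i : ℕ) + 1)) (v (Fin.last n))).count C := by
  rw [countC_sw]
  have hmap : ((toL n v ν).drop ((i : ℕ) + 1)).map (fun p => p.1.count C) =
      (List.ofFn (fun j : Fin n => (v j.castSucc).count C)).drop ((i : ℕ) + 1) := by
    rw [List.map_drop, toL, List.map_ofFn]
    rfl
  rw [hmap, sum_drop_ofFn]
  rw [Fin.sum_univ_castSucc (f := fun j : Fin (n+1) => if (i : ℕ) < (j : ℕ) then (v j).count C else 0)]
  rw [if_pos (by simpa using i.isLt)]
  have : (∑ j : Fin n, if (i : ℕ) < ((j.castSucc : Fin (n+1)) : ℕ) then (v j.castSucc).count C else 0)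
      = ∑ j : Fin n, if (i : ℕ) + 1 ≤ (j : ℕ) then (v j.castSucc).count C else 0 := by
    apply Finset.sum_congr rfl
    intro j _
    exact if_congr (by simp only [Fin.coe_castSucc]; omega) rfl rfl
  rw [this]

/-- `rightC` equals the number of `c`'s beyond position `start i + 2` in the word. -/
lemma rightC_eq_countC_drop (t : ℕ) (us : Fin (2 * t + 1) → List (Fin 3))
    (μ : Fin (2 * t) → Bool) (i : Fin (2 * t)) :
    rightC t us i =
      (((swapWord t us μ).drop
        ((startsL (toL (2 * t) us μ))[(i : ℕ)]'(by simpa using i.isLt) + 2)).count C : ℤ) := by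
  rw [swapWord_eq_sw, sw_countC_drop _ _ _ (by simpa using i.isLt)]
  rw [rightC, ← rightC_gen (2 * t) us μ i]
  push_cast [apply_ite (fun (x : ℕ) => (x : ℤ))]
  rfl

end SwAux
def pCtr (t : ℕ) (μ : Fin (2 * t) → Bool) (i : Fin (2 * t)) : ℤ :=
  if μ i then -1 else 1

def qCtr (t : ℕ) (us : Fin (2 * t + 1) → List (Fin 3)) (μ : Fin (2 * t) → Bool)
    (i : Fin (2 * t)) : ℤ :=
  if μ i then -(rightC t us i) else rightC t us i

def innerC (t : ℕ) (us : Fin (2 * t + 1) → List (Fin 3)) (i j : Fin (2 * t)) : ℤ :=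
  rightC t us i - rightC t us j

def IsStrong2t (t : ℕ) (us : Fin (2 * t + 1) → List (Fin 3))
    (μ : Fin (2 * t) → Bool) : Prop :=
  ∃ f : Fin t → Fin (2 * t) × Fin (2 * t),
    (∀ k, (f k).1 < (f k).2 ∧ μ ((f k).1) = !(μ ((f k).2))) ∧
    Function.Bijective (fun p : Fin t × Bool =>
      if p.2 then (f p.1).1 else (f p.1).2) ∧
    (∑ k : Fin t, if μ ((f k).1) then innerC t us (f k).1 (f k).2 else 0) =
      (∑ k : Fin t, if μ ((f k).1) then 0 else innerC t us (f k).1 (f k).2)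

def StrongTrans (t : ℕ) (w w' : List (Fin 3)) : Prop :=
  ∃ us μ, IsStrong2t t us μ ∧ w = swapWord t us μ ∧
    w' = swapWord t us (fun i => !(μ i))

namespace SwAux

section Sums

variable {t : ℕ} {us : Fin (2 * t + 1) → List (Fin 3)} {μ : Fin (2 * t) → Bool}
  {f : Fin t → Fin (2 * t) × Fin (2 * t)}

lemma sum_via_pairing (F : Fin (2 * t) → ℤ)
    (hbij : Function.Bijective (fun p : Fin t × Bool =>
      if p.2 then (f p.1).1 else (f p.1).2)) :
    ∑ i : Fin (2 * t), F i = ∑ k : Fin t, (F ((f k).1) + F ((f k).2)) := by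
  rw [← Function.Bijective.sum_comp hbij F]
  rw [Fintype.sum_prod_type]
  apply Finset.sum_congr rfl
  intro k _
  rw [Fintype.sum_bool]
  simp

lemma p_sum_zero (hf : ∀ k, (f k).1 < (f k).2 ∧ μ ((f k).1) = !(μ ((f k).2)))
    (hbij : Function.Bijective (fun p : Fin t × Bool =>
      if p.2 then (f p.1).1 else (f p.1).2)) :
    ∑ i : Fin (2 * t), pCtr t μ i = 0 := by
  rw [sum_via_pairing (pCtr t μ) hbij]
  apply Finset.sum_eq_zero
  intro k _
  have h2 := (hf k).2
  cases h1 : μ ((f k).2) <;> rw [h1] at h2 <;> simp [pCtr, h2, h1]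

lemma q_sum_eq (hf : ∀ k, (f k).1 < (f k).2 ∧ μ ((f k).1) = !(μ ((f k).2)))
    (hbij : Function.Bijective (fun p : Fin t × Bool =>
      if p.2 then (f p.1).1 else (f p.1).2)) :
    ∑ i : Fin (2 * t), qCtr t us μ i =
      (∑ k : Fin t, if μ ((f k).1) then 0 else innerC t us (f k).1 (f k).2) -
      (∑ k : Fin t, if μ ((f k).1) then innerC t us (f k).1 (f k).2 else 0) := by
  rw [sum_via_pairing (qCtr t us μ) hbij, ← Finset.sum_sub_distrib]
  apply Finset.sum_congr rfl
  intro k _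
  have h2 := (hf k).2
  cases h1 : μ ((f k).2) <;> rw [h1] at h2 <;>
    simp [qCtr, h2, h1, innerC] <;> ring

lemma strong_sums (h : IsStrong2t t us μ) :
    ∑ i : Fin (2 * t), pCtr t μ i = 0 ∧ ∑ i : Fin (2 * t), qCtr t us μ i = 0 := by
  obtain ⟨f, hf, hbij, hbal⟩ := h
  refine ⟨p_sum_zero hf hbij, ?_⟩
  rw [q_sum_eq hf hbij, hbal]
  ring

end Sums

end SwAux
namespace SwAux

section Converse

variable {t : ℕ} {us : Fin (2 * t + 1) → List (Fin 3)} {μ : Fin (2 * t) → Bool}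

lemma card_true_of_p_sum (hp : ∑ i : Fin (2 * t), pCtr t μ i = 0) :
    (Finset.univ.filter (fun i : Fin (2 * t) => μ i = true)).card = t := by
  classical
  have hsplit := Finset.sum_filter_add_sum_filter_not Finset.univ
    (fun i : Fin (2 * t) => μ i = true) (pCtr t μ)
  have h1 : ∑ i ∈ Finset.univ.filter (fun i : Fin (2 * t) => μ i = true), pCtr t μ i =
      -((Finset.univ.filter (fun i : Fin (2 * t) => μ i = true)).card : ℤ) := by
    calc ∑ i ∈ Finset.univ.filter (fun i : Fin (2 * t) => μ i = true), pCtr t μ i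
        = ∑ _i ∈ Finset.univ.filter (fun i : Fin (2 * t) => μ i = true), (-1 : ℤ) := by
          apply Finset.sum_congr rfl
          intro i hi
          simp only [Finset.mem_filter] at hi
          simp [pCtr, hi.2]
      _ = _ := by simp
  have h2 : ∑ i ∈ Finset.univ.filter (fun i : Fin (2 * t) => ¬(μ i = true)), pCtr t μ i =
      ((Finset.univ.filter (fun i : Fin (2 * t) => ¬(μ i = true))).card : ℤ) := by
    calc ∑ i ∈ Finset.univ.filter (fun i : Fin (2 * t) => ¬(μ i = true)), pCtr t μ i
        = ∑ _i ∈ Finset.univ.filter (fun i : Fin (2 * t) => ¬(μ i = true)), (1 : ℤ) := by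
          apply Finset.sum_congr rfl
          intro i hi
          simp only [Finset.mem_filter] at hi
          simp only [Bool.not_eq_true] at hi
          simp [pCtr, hi.2]
      _ = _ := by simp
  have hcard := Finset.card_filter_add_card_filter_not
    (s := (Finset.univ : Finset (Fin (2 * t)))) (fun i => μ i = true)
  rw [h1, h2, hp] at hsplit
  simp only [Finset.card_univ, Fintype.card_fin] at hcard
  omega

lemma sums_strong (hp : ∑ i : Fin (2 * t), pCtr t μ i = 0)
    (hq : ∑ i : Fin (2 * t), qCtr t us μ i = 0) : IsStrong2t t us μ := by
  classical
  have hT : (Finset.univ.filter (fun i : Fin (2 * t) => μ i = true)).card = t :=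
    card_true_of_p_sum hp
  have hF : (Finset.univ.filter (fun i : Fin (2 * t) => μ i = false)).card = t := by
    have hcard := Finset.card_filter_add_card_filter_not
      (s := (Finset.univ : Finset (Fin (2 * t)))) (fun i => μ i = true)
    simp only [Finset.card_univ, Fintype.card_fin] at hcard
    have heq : (Finset.univ.filter (fun i : Fin (2 * t) => ¬(μ i = true))) =
        (Finset.univ.filter (fun i : Fin (2 * t) => μ i = false)) := by
      apply Finset.filter_congr; intro i _; simp
    rw [heq] at hcard
    omega
  set T := Finset.univ.filter (fun i : Fin (2 * t) => μ i = true) with hTdef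
  set F := Finset.univ.filter (fun i : Fin (2 * t) => μ i = false) with hFdef
  let eT := Finset.equivFinOfCardEq hT
  let eF := Finset.equivFinOfCardEq hF
  let a : Fin t → Fin (2 * t) := fun k => (eT.symm k : _)
  let b : Fin t → Fin (2 * t) := fun k => (eF.symm k : _)
  have ha : ∀ k, μ (a k) = true := fun k => by
    have := (eT.symm k).2
    exact (Finset.mem_filter.mp this).2
  have hb : ∀ k, μ (b k) = false := fun k => by
    have := (eF.symm k).2
    exact (Finset.mem_filter.mp this).2
  have hab : ∀ k, a k ≠ b k := fun k h => by
    have h1 := ha k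
    rw [h, hb k] at h1
    exact Bool.false_ne_true h1
  let f : Fin t → Fin (2 * t) × Fin (2 * t) :=
    fun k => if a k < b k then (a k, b k) else (b k, a k)
  have hf : ∀ k, (f k).1 < (f k).2 ∧ μ ((f k).1) = !(μ ((f k).2)) := by
    intro k
    by_cases hlt : a k < b k
    · simp only [f, if_pos hlt]
      exact ⟨hlt, by rw [ha k, hb k]; rfl⟩
    · have : b k < a k := lt_of_le_of_ne (not_lt.mp hlt) (fun h => hab k h.symm)
      simp only [f, if_neg hlt]
      exact ⟨this, by rw [ha k, hb k]; rfl⟩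
  have hbij : Function.Bijective (fun p : Fin t × Bool =>
      if p.2 then (f p.1).1 else (f p.1).2) := by
    rw [Fintype.bijective_iff_surjective_and_card]
    constructor
    · intro i
      by_cases hμ : μ i = true
      · have hiT : i ∈ T := by rw [hTdef]; simp [hμ]
        refine ⟨(eT ⟨i, hiT⟩, if a (eT ⟨i, hiT⟩) < b (eT ⟨i, hiT⟩) then true else false), ?_⟩
        set k := eT ⟨i, hiT⟩
        have hak : a k = i := by simp [a, k]
        by_cases hlt : a k < b k <;> rw [hak] at hlt <;> simp [f, hak, hlt]
      · have hμ' : μ i = false := by simp at hμ; exact hμ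
        have hiF : i ∈ F := by rw [hFdef]; simp [hμ']
        refine ⟨(eF ⟨i, hiF⟩, if a (eF ⟨i, hiF⟩) < b (eF ⟨i, hiF⟩) then false else true), ?_⟩
        set k := eF ⟨i, hiF⟩
        have hbk : b k = i := by simp [b, k]
        by_cases hlt : a k < b k <;> rw [hbk] at hlt <;> simp [f, hbk, hlt]
    · simp [Fintype.card_prod]
      ring
  refine ⟨f, hf, hbij, ?_⟩
  have hqe := q_sum_eq (us := us) hf hbij
  rw [hq] at hqe
  linarith

end Converse

end SwAux
namespace SwAux

def mask {α : Type*} : List α → List Bool → List α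
  | [], _ => []
  | _ :: _, [] => []
  | x :: l, true :: s => x :: mask l s
  | _ :: l, false :: s => mask l s

def flipSel : List (Seg × Bool) → List Bool → List (Seg × Bool)
  | [], _ => []
  | L, [] => L
  | (u, b) :: L, c :: s => (u, if c then !b else b) :: flipSel L s

def red : Seg → List (Seg × Bool) → List Bool → Seg → List (Seg × Bool) × Seg
  | acc, [], _, e => ([], acc ++ e)
  | acc, (u, b) :: L, true :: s, e => ((acc ++ u, b) :: (red [] L s e).1, (red [] L s e).2)
  | acc, (u, b) :: L, false :: s, e => red (acc ++ u ++ blk b) L s e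
  | acc, (u, b) :: L, [], e => red (acc ++ u ++ blk b) L [] e

lemma red_nil_sel (acc : Seg) (L : List (Seg × Bool)) (e : Seg) :
    (red acc L [] e).1 = [] := by
  induction L generalizing acc with
  | nil => rfl
  | cons p L ih => cases p; exact ih _

lemma red_sw (acc : Seg) (L : List (Seg × Bool)) (s : List Bool) (e : Seg) :
    sw (red acc L s e).1 (red acc L s e).2 = acc ++ sw L e := by
  induction L generalizing acc s with
  | nil => simp [red, sw]
  | cons p L ih =>
    cases p with
    | mk u b =>
      match s with
      | [] =>
        show sw (red (acc ++ u ++ blk b) L [] e).1 (red (acc ++ u ++ blk b) L [] e).2 = _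
        rw [ih]
        simp [sw]
      | true :: s =>
        show sw ((acc ++ u, b) :: (red [] L s e).1) (red [] L s e).2 = _
        rw [sw]
        rw [ih [] s]
        simp [sw]
      | false :: s =>
        show sw (red (acc ++ u ++ blk b) L s e).1 (red (acc ++ u ++ blk b) L s e).2 = _
        rw [ih]
        simp [sw]

lemma red_flipSel (acc : Seg) (L : List (Seg × Bool)) (s : List Bool) (e : Seg) :
    red acc (flipSel L s) s e = (flipL (red acc L s e).1, (red acc L s e).2) := by
  induction L generalizing acc s with
  | nil => simp [red, flipSel, flipL]
  | cons p L ih =>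
    cases p with
    | mk u b =>
      match s with
      | [] =>
        show red acc ((u, b) :: L) [] e = _
        apply Prod.ext
        · show (red acc ((u, b) :: L) [] e).1 = flipL (red acc ((u, b) :: L) [] e).1
          rw [red_nil_sel]
          rfl
        · rfl
      | true :: s =>
        show red acc ((u, !b) :: flipSel L s) (true :: s) e = _
        show ((acc ++ u, !b) :: (red [] (flipSel L s) s e).1, (red [] (flipSel L s) s e).2) = _
        rw [ih [] s]
        rfl
      | false :: s =>
        show red (acc ++ u ++ blk b) (flipSel L s) s e = _
        rw [ih]
        rfl

lemma red_snd (acc : Seg) (L : List (Seg × Bool)) (s : List Bool) (e : Seg) :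
    (red acc L s e).1.map Prod.snd = mask (L.map Prod.snd) s := by
  induction L generalizing acc s with
  | nil => simp [red, mask]
  | cons p L ih =>
    cases p with
    | mk u b =>
      match s with
      | [] => rw [red_nil_sel]; rfl
      | true :: s =>
        show ((acc ++ u, b) :: (red [] L s e).1).map Prod.snd = _
        rw [List.map_cons, ih [] s]
        rfl
      | false :: s =>
        show (red (acc ++ u ++ blk b) L s e).1.map Prod.snd = _
        rw [ih]
        rfl

def rcL : List (Seg × Bool) → Seg → List ℤ
  | [], _ => []
  | _ :: L, e => ((sw L e).count C : ℤ) :: rcL L e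

lemma red_rcL (acc : Seg) (L : List (Seg × Bool)) (s : List Bool) (e : Seg) :
    rcL (red acc L s e).1 (red acc L s e).2 = mask (rcL L e) s := by
  induction L generalizing acc s with
  | nil => simp [red, rcL, mask]
  | cons p L ih =>
    cases p with
    | mk u b =>
      match s with
      | [] => rw [red_nil_sel]; rfl
      | true :: s =>
        show rcL ((acc ++ u, b) :: (red [] L s e).1) (red [] L s e).2 = _
        rw [rcL]
        rw [red_sw [] L s e]
        rw [ih [] s]
        rfl
      | false :: s =>
        show rcL (red (acc ++ u ++ blk b) L s e).1 (red (acc ++ u ++ blk b) L s e).2 = _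
        rw [ih]
        rfl

lemma mask_map {α β : Type*} (f : α → β) (l : List α) (s : List Bool) :
    (mask l s).map f = mask (l.map f) s := by
  induction l generalizing s with
  | nil => simp [mask]
  | cons x l ih =>
    match s with
    | [] => rfl
    | true :: s => simp [mask, ih]
    | false :: s => simp [mask, ih]

lemma mask_sum_ofFn {M : Type*} [AddCommMonoid M] (n : ℕ) (g : Fin n → M) (P : Fin n → Bool) :
    (mask (List.ofFn g) (List.ofFn P)).sum = ∑ i : Fin n, if P i then g i else 0 := by
  induction n with
  | zero => simp [mask]
  | succ n ih =>
    rw [List.ofFn_succ, List.ofFn_succ (f := P)]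
    rw [Fin.sum_univ_succ]
    cases hP : P 0 with
    | true =>
      show (g 0 :: mask (List.ofFn fun i => g i.succ) (List.ofFn fun i => P i.succ)).sum = _
      rw [List.sum_cons, ih]
      simp
    | false =>
      show (mask (List.ofFn fun i => g i.succ) (List.ofFn fun i => P i.succ)).sum = _
      rw [ih]
      simp

lemma mask_zipWith {α β γ : Type*} (f : α → β → γ) (l : List α) (l' : List β) (s : List Bool)
    (h : l.length = l'.length) :
    List.zipWith f (mask l s) (mask l' s) = mask (List.zipWith f l l') s := by
  induction l generalizing l' s with
  | nil =>
    have : l' = [] := by cases l' <;> simp_all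
    subst this
    simp [mask]
  | cons x l ih =>
    match l' with
    | [] => simp at h
    | y :: l' =>
      have h' : l.length = l'.length := by simpa using h
      match s with
      | [] => rfl
      | true :: s => simp [mask, ih l' s h']
      | false :: s => simp [mask, ih l' s h']

lemma zipWith_ofFn {α β γ : Type*} (n : ℕ) (g : Fin n → α) (g' : Fin n → β) (f : α → β → γ) :
    List.zipWith f (List.ofFn g) (List.ofFn g') = List.ofFn (fun i => f (g i) (g' i)) := by
  induction n with
  | zero => simp
  | succ n ih =>
    rw [List.ofFn_succ, List.ofFn_succ (f := g'), List.ofFn_succ (f := fun i => f (g i) (g' i))]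
    simp only [List.zipWith_cons_cons]
    rw [ih]

end SwAux
namespace SwAux

lemma flipSel_toL (n : ℕ) (v : Fin (n + 1) → Seg) (ν : Fin n → Bool) (P : Fin n → Bool) :
    flipSel (toL n v ν) (List.ofFn P) = toL n v (fun i => if P i then !(ν i) else ν i) := by
  induction n with
  | zero => simp [toL, flipSel]
  | succ n ih =>
    rw [toL_succ, List.ofFn_succ, toL_succ]
    show ((v 0, if P 0 then !(ν 0) else ν 0) :: flipSel (toL n _ _) (List.ofFn fun i => P i.succ)) = _
    rw [ih (fun i => v i.succ) (fun i => ν i.succ) (fun i => P i.succ)]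

def RC (n : ℕ) (v : Fin (n + 1) → Seg) (i : Fin n) : ℤ :=
  ∑ j : Fin (n + 1), if (i : ℕ) < (j : ℕ) then ((v j).count C : ℤ) else 0

lemma rightC_eq_RC (t : ℕ) (us : Fin (2 * t + 1) → List (Fin 3)) :
    rightC t us = RC (2 * t) us := rfl

lemma countC_sw_toL (n : ℕ) (v : Fin (n + 1) → Seg) (ν : Fin n → Bool) :
    ((sw (toL n v ν) (v (Fin.last n))).count C : ℤ) = ∑ j : Fin (n + 1), ((v j).count C : ℤ) := by
  rw [countC_sw]
  have : (toL n v ν).map (fun p => p.1.count C) = List.ofFn (fun i : Fin n => (v i.castSucc).count C) := by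
    rw [toL, List.map_ofFn]; rfl
  rw [this, List.sum_ofFn]
  rw [Fin.sum_univ_castSucc (f := fun j : Fin (n + 1) => ((v j).count C : ℤ))]
  push_cast
  ring

lemma rcL_toL (n : ℕ) (v : Fin (n + 1) → Seg) (ν : Fin n → Bool) :
    rcL (toL n v ν) (v (Fin.last n)) = List.ofFn (RC n v) := by
  induction n with
  | zero => simp [toL, rcL]
  | succ n ih =>
    rw [toL_succ]
    show ((sw (toL n (fun i => v i.succ) (fun i => ν i.succ))
        (v (Fin.last (n + 1)))).count C : ℤ) :: rcL _ _ = _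
    have hlast : v (Fin.last (n + 1)) = (fun i : Fin (n + 1) => v i.succ) (Fin.last n) := by
      simp [Fin.succ_last]
    rw [List.ofFn_succ (f := RC (n + 1) v)]
    congr 1
    · rw [hlast, countC_sw_toL n (fun i => v i.succ) (fun i => ν i.succ)]
      rw [RC, Fin.sum_univ_succ (f := fun j : Fin (n + 2) =>
        if ((0 : Fin (n+1)) : ℕ) < (j : ℕ) then ((v j).count C : ℤ) else 0)]
      simp
    · rw [hlast, ih (fun i => v i.succ) (fun i => ν i.succ)]
      congr 1
      funext i
      rw [RC, RC, Fin.sum_univ_succ (f := fun j : Fin (n + 2) =>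
        if ((i.succ : Fin (n+1)) : ℕ) < (j : ℕ) then ((v j).count C : ℤ) else 0)]
      simp only [Fin.val_succ, Fin.val_zero, if_neg (by omega : ¬ (i : ℕ) + 1 < 0), zero_add]
      simp only [Nat.not_lt_zero, if_false, zero_add]
      apply Finset.sum_congr rfl
      intro j _
      exact if_congr (by simp [Fin.val_succ]) rfl rfl

lemma length_eq_sum_ones {α : Type*} (l : List α) : (l.map (fun _ => (1 : ℕ))).sum = l.length := by
  induction l <;> simp [*] <;> omega

lemma toL_reconstruct (n : ℕ) (P : List (Seg × Bool)) (hP : P.length = n) (e' : Seg) :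
    toL n (fun j : Fin (n + 1) => if h : (j : ℕ) < n then (P[(j : ℕ)]'(by omega)).1 else e')
      (fun j : Fin n => (P[(j : ℕ)]'(by omega)).2) = P := by
  subst hP
  rw [toL]
  apply List.ext_getElem (by simp)
  intro i h1 h2
  rw [List.getElem_ofFn]
  have hc : ((⟨i, by simpa using h1⟩ : Fin P.length).castSucc : ℕ) = i := rfl
  rw [dif_pos (by simpa using h1 : ((⟨i, by simpa using h1⟩ : Fin P.length).castSucc : ℕ) < P.length)]
  exact Prod.ext rfl rfl

end SwAux
namespace SwAux

lemma sum_decide_mem {n : ℕ} (J : Finset (Fin n)) (X : Fin n → ℤ) :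
    (∑ i : Fin n, if decide (i ∈ J) then X i else 0) = ∑ i ∈ J, X i := by
  classical
  have h := Finset.sum_ite_mem Finset.univ J X
  rw [Finset.univ_inter] at h
  rw [← h]
  apply Finset.sum_congr rfl
  intro i _
  simp only [decide_eq_true_eq]

lemma sub_trans (t : ℕ) (us : Fin (2 * t + 1) → List (Fin 3)) (ν : Fin (2 * t) → Bool)
    (J : Finset (Fin (2 * t))) (m : ℕ) (hm : J.card = 2 * m)
    (hp : ∑ i ∈ J, pCtr t ν i = 0) (hq : ∑ i ∈ J, qCtr t us ν i = 0) :
    StrongTrans m (swapWord t us ν)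
      (swapWord t us (fun i => if i ∈ J then !(ν i) else ν i)) := by
  classical
  set L := toL (2 * t) us ν with hL
  set e := us (Fin.last (2 * t)) with he
  set s : List Bool := List.ofFn (fun i : Fin (2 * t) => decide (i ∈ J)) with hs
  set R := red [] L s e with hR
  have hsnd : R.1.map Prod.snd = mask (L.map Prod.snd) s := red_snd _ _ _ _
  have hmapL : L.map Prod.snd = List.ofFn ν := by
    rw [hL, toL, List.map_ofFn]; rfl
  -- length of the selected list
  have hlen1 : R.1.length = 2 * m := by
    have h1 := congrArg List.length hsnd
    rw [List.length_map, hmapL] at h1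
    have h2 : (mask (List.ofFn ν) s).length =
        ((mask (List.ofFn ν) s).map (fun _ => (1 : ℕ))).sum := (length_eq_sum_ones _).symm
    rw [h2, mask_map, List.map_ofFn] at h1
    rw [hs] at h1
    simp only [Function.comp_def] at h1
    rw [mask_sum_ofFn (2 * t) (fun _ => (1 : ℕ)) (fun i => decide (i ∈ J))] at h1
    have h3 : (∑ i : Fin (2 * t), if decide (i ∈ J) then (1 : ℕ) else 0) = J.card := by
      calc ∑ i : Fin (2 * t), (if decide (i ∈ J) then (1 : ℕ) else 0)
          = ∑ i : Fin (2 * t), (if i ∈ J then (1 : ℕ) else 0) := by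
            apply Finset.sum_congr rfl
            intro i _
            simp only [decide_eq_true_eq]
        _ = J.card := by
            rw [Finset.sum_ite_mem, Finset.univ_inter, Finset.card_eq_sum_ones]
    rw [h1, h3, hm]
  -- reconstruct the new decomposition
  let us' : Fin (2 * m + 1) → List (Fin 3) := fun j =>
    if h : (j : ℕ) < 2 * m then (R.1[(j : ℕ)]'(by omega)).1 else R.2
  let μ' : Fin (2 * m) → Bool := fun j => (R.1[(j : ℕ)]'(by omega)).2
  have hrec : toL (2 * m) us' μ' = R.1 := toL_reconstruct (2 * m) R.1 hlen1 R.2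
  have hlast : us' (Fin.last (2 * m)) = R.2 := by
    simp only [us']
    rw [dif_neg (by simp)]
  -- the three word identities
  have hw : swapWord t us ν = sw R.1 R.2 := by
    rw [swapWord_eq_sw, hR, red_sw]
    simp
    rfl
  have hw1 : swapWord m us' μ' = sw R.1 R.2 := by
    rw [swapWord_eq_sw, hrec, hlast]
  have hsel : toL (2 * t) us (fun i => if i ∈ J then !(ν i) else ν i) = flipSel L s := by
    rw [hL, hs, flipSel_toL]
    congr 1
    funext i
    by_cases hi : i ∈ J <;> simp [hi]
  have hw2 : swapWord t us (fun i => if i ∈ J then !(ν i) else ν i) = sw (flipL R.1) R.2 := by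
    rw [swapWord_eq_sw, hsel, ← he]
    have h2 := red_sw [] (flipSel L s) s e
    rw [red_flipSel [] L s e, List.nil_append] at h2
    exact h2.symm
  have hw2' : swapWord m us' (fun j => !(μ' j)) = sw (flipL R.1) R.2 := by
    rw [swapWord_eq_sw]
    have : toL (2 * m) us' (fun j => !(μ' j)) = flipL (toL (2 * m) us' μ') := by
      rw [flipL_toL]
    rw [this, hrec, hlast]
  -- boolean list identity
  have hofFnμ' : List.ofFn μ' = mask (List.ofFn ν) s := by
    have : List.ofFn μ' = (toL (2 * m) us' μ').map Prod.snd := by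
      rw [toL, List.map_ofFn]; rfl
    rw [this, hrec, hsnd, hmapL]
  -- rightC list identity
  have hrcR : List.ofFn (RC (2 * m) us') = mask (List.ofFn (rightC t us)) s := by
    have h1 : rcL R.1 R.2 = List.ofFn (RC (2 * m) us') := by
      rw [← hrec, ← hlast, rcL_toL]
    have h2 : rcL R.1 R.2 = mask (rcL L e) s := red_rcL _ _ _ _
    have h3 : rcL L e = List.ofFn (rightC t us) := by
      rw [hL, he, rcL_toL, rightC_eq_RC]
    rw [← h1, h2, h3]
  -- p-sum of the new decomposition
  have hpsum : ∑ j : Fin (2 * m), pCtr m μ' j = 0 := by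
    have h1 : ∑ j : Fin (2 * m), pCtr m μ' j =
        ((List.ofFn μ').map (fun b => if b then (-1 : ℤ) else 1)).sum := by
      rw [List.map_ofFn, List.sum_ofFn]; rfl
    rw [h1, hofFnμ', mask_map, List.map_ofFn, hs]
    simp only [Function.comp_def]
    rw [mask_sum_ofFn (2 * t) (fun i => if ν i then (-1 : ℤ) else 1) (fun i => decide (i ∈ J))]
    rw [sum_decide_mem J (fun i => if ν i then (-1 : ℤ) else 1)]
    exact hp
  -- q-sum of the new decomposition
  have hqsum : ∑ j : Fin (2 * m), qCtr m us' μ' j = 0 := by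
    have h1 : ∑ j : Fin (2 * m), qCtr m us' μ' j =
        (List.zipWith (fun (b : Bool) (r : ℤ) => if b then -r else r)
          (List.ofFn μ') (List.ofFn (RC (2 * m) us'))).sum := by
      rw [zipWith_ofFn, List.sum_ofFn]; rfl
    rw [h1, hofFnμ', hrcR]
    rw [mask_zipWith _ _ _ _ (by simp)]
    rw [zipWith_ofFn, hs]
    rw [mask_sum_ofFn (2 * t) (fun i => if ν i then -(rightC t us i) else rightC t us i)
      (fun i => decide (i ∈ J))]
    rw [sum_decide_mem J (fun i => if ν i then -(rightC t us i) else rightC t us i)]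
    exact hq
  exact ⟨us', μ', sums_strong hpsum hqsum, by rw [hw, hw1], by rw [hw2, hw2']⟩

end SwAux
namespace SwAux

def PS (S : List ℕ) (m : ℕ) : Prop := ∃ s ∈ S, m = s ∨ m = s + 1

/-- Key alignment lemma: if the block positions of two decompositions partition the
block positions of a third, then every block start of the former is a block start
of the latter. -/
lemma align (S S₁ S₂ : List ℕ)
    (sepS : ∀ a ∈ S, ∀ b ∈ S, a ≠ b → a + 2 ≤ b ∨ b + 2 ≤ a)
    (sep1 : ∀ a ∈ S₁, ∀ b ∈ S₁, a ≠ b → a + 2 ≤ b ∨ b + 2 ≤ a)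
    (sep2 : ∀ a ∈ S₂, ∀ b ∈ S₂, a ≠ b → a + 2 ≤ b ∨ b + 2 ≤ a)
    (hsub : ∀ m, PS S m ↔ (PS S₁ m ∨ PS S₂ m))
    (hdisj : ∀ m, ¬(PS S₁ m ∧ PS S₂ m)) :
    ∀ m, (m ∈ S₁ ∨ m ∈ S₂) → m ∈ S := by
  intro m
  induction m using Nat.strong_induction_on with
  | _ m IH =>
    intro hm
    have hPSd : PS S₁ m ∨ PS S₂ m :=
      hm.imp (fun h => ⟨m, h, Or.inl rfl⟩) (fun h => ⟨m, h, Or.inl rfl⟩)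
    have hPS : PS S m := (hsub m).mpr hPSd
    obtain ⟨sS, hsS, hcase⟩ := hPS
    rcases hcase with rfl | rfl
    · exact hsS
    · exfalso
      have hs' : PS S₁ sS ∨ PS S₂ sS := (hsub sS).mp ⟨sS, hsS, Or.inl rfl⟩
      rcases hm with hm1 | hm1 <;> rcases hs' with ⟨x, hx, hxc⟩ | ⟨x, hx, hxc⟩
      · rcases hxc with h | h
        · rcases sep1 x hx (sS + 1) hm1 (by omega) with h2 | h2 <;> omega
        · have hxS : x ∈ S := IH x (by omega) (Or.inl hx)
          rcases sepS x hxS sS hsS (by omega) with h2 | h2 <;> omega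
      · rcases hxc with h | h
        · exact hdisj (sS + 1) ⟨⟨sS + 1, hm1, Or.inl rfl⟩, ⟨x, hx, Or.inr (by omega)⟩⟩
        · have hxS : x ∈ S := IH x (by omega) (Or.inr hx)
          rcases sepS x hxS sS hsS (by omega) with h2 | h2 <;> omega
      · rcases hxc with h | h
        · exact hdisj (sS + 1) ⟨⟨x, hx, Or.inr (by omega)⟩, ⟨sS + 1, hm1, Or.inl rfl⟩⟩
        · have hxS : x ∈ S := IH x (by omega) (Or.inl hx)
          rcases sepS x hxS sS hsS (by omega) with h2 | h2 <;> omega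
      · rcases hxc with h | h
        · rcases sep2 x hx (sS + 1) hm1 (by omega) with h2 | h2 <;> omega
        · have hxS : x ∈ S := IH x (by omega) (Or.inr hx)
          rcases sepS x hxS sS hsS (by omega) with h2 | h2 <;> omega

def PF (S : List ℕ) : Finset ℕ := S.toFinset ∪ (S.map (· + 1)).toFinset

lemma mem_PF (S : List ℕ) (m : ℕ) : m ∈ PF S ↔ PS S m := by
  simp only [PF, Finset.mem_union, List.mem_toFinset, List.mem_map, PS]
  constructor
  · rintro (h | ⟨a, ha, rfl⟩)
    · exact ⟨m, h, Or.inl rfl⟩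
    · exact ⟨a, ha, Or.inr rfl⟩
  · rintro ⟨s, hs, rfl | rfl⟩
    · exact Or.inl hs
    · exact Or.inr ⟨s, hs, rfl⟩

lemma card_PF (S : List ℕ) (nodup : S.Nodup)
    (sep : ∀ a ∈ S, ∀ b ∈ S, a ≠ b → a + 2 ≤ b ∨ b + 2 ≤ a) :
    (PF S).card = 2 * S.length := by
  rw [PF, Finset.card_union_of_disjoint]
  · rw [List.toFinset_card_of_nodup nodup,
      List.toFinset_card_of_nodup (List.Nodup.map (fun a b h => by omega) nodup)]
    rw [List.length_map]
    omega
  · rw [Finset.disjoint_left]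
    intro x hx1 hx2
    rw [List.mem_toFinset] at hx1
    rw [List.mem_toFinset, List.mem_map] at hx2
    obtain ⟨a, ha, rfl⟩ := hx2
    rcases sep a ha (a + 1) hx1 (by omega) with h | h <;> omega

lemma startsL_sep' (L : List (Seg × Bool)) :
    ∀ a ∈ startsL L, ∀ b ∈ startsL L, a ≠ b → a + 2 ≤ b ∨ b + 2 ≤ a :=
  fun a ha b hb hab => startsL_sep L ha hb hab

lemma card_PF_startsL (L : List (Seg × Bool)) : (PF (startsL L)).card = 2 * L.length := by
  rw [card_PF _ (startsL_nodup L) (startsL_sep' L), length_startsL]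

end SwAux
namespace SwAux

lemma toL_getElem_snd (n : ℕ) (v : Fin (n + 1) → Seg) (ν : Fin n → Bool) (i : Fin n) :
    ((toL n v ν)[(i : ℕ)]'(by simpa using i.isLt)).2 = ν i := by
  simp [toL]

lemma swapWord_get_start (t : ℕ) (us : Fin (2 * t + 1) → List (Fin 3))
    (μ : Fin (2 * t) → Bool) (i : Fin (2 * t)) :
    (swapWord t us μ)[(startsL (toL (2 * t) us μ))[(i : ℕ)]'(by simpa using i.isLt)]? =
      some (if μ i then A else B) := by
  rw [swapWord_eq_sw]
  have h := sw_get_start (toL (2 * t) us μ) (us (Fin.last (2 * t))) (i : ℕ)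
    (by simpa using i.isLt)
  rw [h, toL_getElem_snd]

lemma forward_dir (t t₁ t₂ : ℕ) (ht1 : 0 < t₁) (ht2 : 0 < t₂) (htt : t₁ + t₂ = t)
    (us : Fin (2 * t + 1) → List (Fin 3)) (μ : Fin (2 * t) → Bool) (w'' : List (Fin 3))
    (h1 : StrongTrans t₁ (swapWord t us μ) w'')
    (h2 : StrongTrans t₂ w'' (swapWord t us (fun i => !(μ i)))) :
    ∃ I : Finset (Fin (2 * t)), I.Nonempty ∧ I ≠ Finset.univ ∧
      ∑ i ∈ I, pCtr t μ i = 0 ∧ ∑ i ∈ I, qCtr t us μ i = 0 := by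
  classical
  obtain ⟨us₁, μ₁, hS1, hw1, hw''1⟩ := h1
  obtain ⟨us₂, μ₂, hS2, hw''2, hw'2⟩ := h2
  have hd : ∀ m, (swapWord t us μ)[m]? ≠ (swapWord t us (fun i => !(μ i)))[m]? ↔
      PS (startsL (toL (2 * t) us μ)) m := by
    intro m
    rw [swapWord_eq_sw t us μ, swapWord_eq_sw t us (fun i => !(μ i)), ← flipL_toL]
    exact sw_diff _ _ m
  have hd1 : ∀ m, (swapWord t us μ)[m]? ≠ w''[m]? ↔
      PS (startsL (toL (2 * t₁) us₁ μ₁)) m := by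
    intro m
    rw [hw1, hw''1, swapWord_eq_sw, swapWord_eq_sw, ← flipL_toL]
    exact sw_diff _ _ m
  have hd2 : ∀ m, w''[m]? ≠ (swapWord t us (fun i => !(μ i)))[m]? ↔
      PS (startsL (toL (2 * t₂) us₂ μ₂)) m := by
    intro m
    rw [hw''2, hw'2, swapWord_eq_sw, swapWord_eq_sw, ← flipL_toL]
    exact sw_diff _ _ m
  have hpoint : ∀ m, PS (startsL (toL (2 * t) us μ)) m →
      PS (startsL (toL (2 * t₁) us₁ μ₁)) m ∨ PS (startsL (toL (2 * t₂) us₂ μ₂)) m := by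
    intro m hm
    by_contra hc
    push_neg at hc
    have e1 : (swapWord t us μ)[m]? = w''[m]? := by
      by_contra hne; exact hc.1 ((hd1 m).mp hne)
    have e2 : w''[m]? = (swapWord t us (fun i => !(μ i)))[m]? := by
      by_contra hne; exact hc.2 ((hd2 m).mp hne)
    exact ((hd m).mpr hm) (e1.trans e2)
  have hsubPF : PF (startsL (toL (2 * t) us μ)) ⊆
      PF (startsL (toL (2 * t₁) us₁ μ₁)) ∪ PF (startsL (toL (2 * t₂) us₂ μ₂)) := by
    intro m hm
    rw [Finset.mem_union, mem_PF, mem_PF]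
    exact hpoint m ((mem_PF _ m).mp hm)
  have hcS : (PF (startsL (toL (2 * t) us μ))).card = 4 * t := by
    rw [card_PF_startsL, length_toL]; omega
  have hcS1 : (PF (startsL (toL (2 * t₁) us₁ μ₁))).card = 4 * t₁ := by
    rw [card_PF_startsL, length_toL]; omega
  have hcS2 : (PF (startsL (toL (2 * t₂) us₂ μ₂))).card = 4 * t₂ := by
    rw [card_PF_startsL, length_toL]; omega
  have hUcard : (PF (startsL (toL (2 * t₁) us₁ μ₁)) ∪
      PF (startsL (toL (2 * t₂) us₂ μ₂))).card ≤ 4 * t := by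
    have := Finset.card_union_le (PF (startsL (toL (2 * t₁) us₁ μ₁)))
      (PF (startsL (toL (2 * t₂) us₂ μ₂)))
    omega
  have hUeq : PF (startsL (toL (2 * t) us μ)) =
      PF (startsL (toL (2 * t₁) us₁ μ₁)) ∪ PF (startsL (toL (2 * t₂) us₂ μ₂)) :=
    Finset.eq_of_subset_of_card_le hsubPF (by omega)
  have hinterc : (PF (startsL (toL (2 * t₁) us₁ μ₁)) ∩
      PF (startsL (toL (2 * t₂) us₂ μ₂))).card = 0 := by
    have hci := Finset.card_union_add_card_inter (PF (startsL (toL (2 * t₁) us₁ μ₁)))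
      (PF (startsL (toL (2 * t₂) us₂ μ₂)))
    have hUc : (PF (startsL (toL (2 * t₁) us₁ μ₁)) ∪
        PF (startsL (toL (2 * t₂) us₂ μ₂))).card = 4 * t := by
      rw [← hUeq, hcS]
    omega
  have hsub : ∀ m, PS (startsL (toL (2 * t) us μ)) m ↔
      (PS (startsL (toL (2 * t₁) us₁ μ₁)) m ∨ PS (startsL (toL (2 * t₂) us₂ μ₂)) m) := by
    intro m
    rw [← mem_PF, ← mem_PF, ← mem_PF, ← Finset.mem_union, hUeq]
  have hdisj : ∀ m, ¬(PS (startsL (toL (2 * t₁) us₁ μ₁)) m ∧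
      PS (startsL (toL (2 * t₂) us₂ μ₂)) m) := by
    rintro m ⟨ha, hb⟩
    have hmem : m ∈ PF (startsL (toL (2 * t₁) us₁ μ₁)) ∩
        PF (startsL (toL (2 * t₂) us₂ μ₂)) :=
      Finset.mem_inter.mpr ⟨(mem_PF _ _).mpr ha, (mem_PF _ _).mpr hb⟩
    have := Finset.card_eq_zero.mp hinterc
    rw [this] at hmem
    exact absurd hmem (Finset.notMem_empty m)
  have halign := align _ _ _ (startsL_sep' (toL (2 * t) us μ))
    (startsL_sep' (toL (2 * t₁) us₁ μ₁)) (startsL_sep' (toL (2 * t₂) us₂ μ₂)) hsub hdisj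
  have hι : ∀ j : Fin (2 * t₁), ∃ i : Fin (2 * t),
      (startsL (toL (2 * t) us μ))[(i : ℕ)]'(by simpa using i.isLt) =
      (startsL (toL (2 * t₁) us₁ μ₁))[(j : ℕ)]'(by simpa using j.isLt) := by
    intro j
    have hmem : (startsL (toL (2 * t₁) us₁ μ₁))[(j : ℕ)]'(by simpa using j.isLt) ∈
        startsL (toL (2 * t₁) us₁ μ₁) := List.getElem_mem _
    have hmemS : (startsL (toL (2 * t₁) us₁ μ₁))[(j : ℕ)]'(by simpa using j.isLt) ∈
        startsL (toL (2 * t) us μ) := halign _ (Or.inl hmem)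
    obtain ⟨i, hi, hEq⟩ := List.mem_iff_getElem.mp hmemS
    exact ⟨⟨i, by simpa using hi⟩, hEq⟩
  choose ι hι' using hι
  have hbool : ∀ j : Fin (2 * t₁), μ (ι j) = μ₁ j := by
    intro j
    have g1 := swapWord_get_start t us μ (ι j)
    have g2 := swapWord_get_start t₁ us₁ μ₁ j
    rw [← hw1] at g2
    rw [hι' j] at g1
    have hcmp := g1.symm.trans g2
    cases hb1 : μ (ι j) <;> cases hb2 : μ₁ j <;> rw [hb1, hb2] at hcmp <;>
      first
        | rfl
        | (exfalso; exact absurd (Option.some.inj hcmp) (by decide))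
  have hrc : ∀ j : Fin (2 * t₁), rightC t us (ι j) = rightC t₁ us₁ j := by
    intro j
    rw [rightC_eq_countC_drop t us μ (ι j), rightC_eq_countC_drop t₁ us₁ μ₁ j, ← hw1]
    rw [hι' j]
  have hinj : Function.Injective ι := by
    intro j j' hjj
    have hEq : (startsL (toL (2 * t₁) us₁ μ₁))[(j : ℕ)]'(by simpa using j.isLt) =
        (startsL (toL (2 * t₁) us₁ μ₁))[(j' : ℕ)]'(by simpa using j'.isLt) := by
      rw [← hι' j, ← hι' j', hjj]
    have hv : (j : ℕ) = (j' : ℕ) := by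
      by_contra hne
      rcases Nat.lt_or_ge (j : ℕ) (j' : ℕ) with hlt | hge
      · have := startsL_getElem_lt (toL (2 * t₁) us₁ μ₁) hlt (by simpa using j'.isLt)
        omega
      · have hlt' : (j' : ℕ) < (j : ℕ) := by omega
        have := startsL_getElem_lt (toL (2 * t₁) us₁ μ₁) hlt' (by simpa using j.isLt)
        omega
    exact Fin.ext hv
  refine ⟨Finset.image ι Finset.univ, ?_, ?_, ?_, ?_⟩
  · exact Finset.Nonempty.image ⟨⟨0, by omega⟩, Finset.mem_univ _⟩ _
  · intro hEq
    have hc := congrArg Finset.card hEq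
    rw [Finset.card_image_of_injective _ hinj, Finset.card_univ, Finset.card_univ] at hc
    simp only [Fintype.card_fin] at hc
    omega
  · rw [Finset.sum_image (fun x _ y _ h => hinj h)]
    have : ∀ j : Fin (2 * t₁), pCtr t μ (ι j) = pCtr t₁ μ₁ j := by
      intro j
      rw [pCtr, pCtr, hbool j]
    rw [Finset.sum_congr rfl (fun j _ => this j)]
    exact (strong_sums hS1).1
  · rw [Finset.sum_image (fun x _ y _ h => hinj h)]
    have : ∀ j : Fin (2 * t₁), qCtr t us μ (ι j) = qCtr t₁ us₁ μ₁ j := by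
      intro j
      rw [qCtr, qCtr, hbool j, hrc j]
    rw [Finset.sum_congr rfl (fun j _ => this j)]
    exact (strong_sums hS1).2

end SwAux
namespace SwAux

lemma card_I {t : ℕ} {μ : Fin (2 * t) → Bool} (I : Finset (Fin (2 * t)))
    (hp : ∑ i ∈ I, pCtr t μ i = 0) :
    I.card = 2 * (I.filter (fun i => μ i = true)).card := by
  classical
  have hsplit := Finset.sum_filter_add_sum_filter_not I
    (fun i : Fin (2 * t) => μ i = true) (pCtr t μ)
  have h1 : ∑ i ∈ I.filter (fun i : Fin (2 * t) => μ i = true), pCtr t μ i =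
      -((I.filter (fun i : Fin (2 * t) => μ i = true)).card : ℤ) := by
    calc ∑ i ∈ I.filter (fun i : Fin (2 * t) => μ i = true), pCtr t μ i
        = ∑ _i ∈ I.filter (fun i : Fin (2 * t) => μ i = true), (-1 : ℤ) := by
          apply Finset.sum_congr rfl
          intro i hi
          simp only [Finset.mem_filter] at hi
          simp [pCtr, hi.2]
      _ = _ := by simp
  have h2 : ∑ i ∈ I.filter (fun i : Fin (2 * t) => ¬(μ i = true)), pCtr t μ i =
      ((I.filter (fun i : Fin (2 * t) => ¬(μ i = true))).card : ℤ) := by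
    calc ∑ i ∈ I.filter (fun i : Fin (2 * t) => ¬(μ i = true)), pCtr t μ i
        = ∑ _i ∈ I.filter (fun i : Fin (2 * t) => ¬(μ i = true)), (1 : ℤ) := by
          apply Finset.sum_congr rfl
          intro i hi
          simp only [Finset.mem_filter] at hi
          simp only [Bool.not_eq_true] at hi
          simp [pCtr, hi.2]
      _ = _ := by simp
  have hcard := Finset.card_filter_add_card_filter_not
    (s := I) (fun i : Fin (2 * t) => μ i = true)
  rw [h1, h2, hp] at hsplit
  omega

end SwAux

theorem strong2t_reducible_iff_subset (t : ℕ) (ht : 1 ≤ t)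
    (us : Fin (2 * t + 1) → List (Fin 3)) (μ : Fin (2 * t) → Bool)
    (h : IsStrong2t t us μ) :
    (∃ (w'' : List (Fin 3)) (t₁ t₂ : ℕ), 0 < t₁ ∧ 0 < t₂ ∧ t₁ + t₂ = t ∧
        StrongTrans t₁ (swapWord t us μ) w'' ∧
        StrongTrans t₂ w'' (swapWord t us (fun i => !(μ i)))) ↔
      (∃ I : Finset (Fin (2 * t)), I.Nonempty ∧ I ≠ Finset.univ ∧
        ∑ i ∈ I, pCtr t μ i = 0 ∧ ∑ i ∈ I, qCtr t us μ i = 0) := by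
  classical
  constructor
  · rintro ⟨w'', t₁, t₂, ht1, ht2, htt, h1, h2⟩
    exact SwAux.forward_dir t t₁ t₂ ht1 ht2 htt us μ w'' h1 h2
  · rintro ⟨I, hne, hproper, hp, hq⟩
    have hm : I.card = 2 * (I.filter (fun i => μ i = true)).card := SwAux.card_I I hp
    set t₁ := (I.filter (fun i => μ i = true)).card with ht₁def
    have hIle : I.card ≤ 2 * t := by
      have := Finset.card_le_univ I
      simpa using this
    have hIlt : I.card < 2 * t := by
      have hss : I ⊂ Finset.univ := Finset.ssubset_univ_iff.mpr hproper
      have := Finset.card_lt_card hss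
      simpa using this
    have ht1pos : 0 < t₁ := by
      have := Finset.card_pos.mpr hne
      omega
    have ht1lt : t₁ < t := by omega
    have hm2 : Iᶜ.card = 2 * (t - t₁) := by
      rw [Finset.card_compl]
      simp only [Fintype.card_fin]
      omega
    set μ'' : Fin (2 * t) → Bool := fun i => if i ∈ I then !(μ i) else μ i with hμ''
    have tr1 := SwAux.sub_trans t us μ I t₁ hm hp hq
    have hsum := SwAux.strong_sums h
    have hsplitp := Finset.sum_add_sum_compl I (pCtr t μ)
    have hsplitq := Finset.sum_add_sum_compl I (qCtr t us μ)
    have hp2 : ∑ i ∈ Iᶜ, pCtr t μ'' i = 0 := by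
      have hpoint : ∀ i ∈ Iᶜ, pCtr t μ'' i = pCtr t μ i := by
        intro i hi
        have hii : μ'' i = μ i := by
          rw [hμ'']
          simp [Finset.mem_compl.mp hi]
        unfold pCtr
        rw [hii]
      rw [Finset.sum_congr rfl hpoint]
      have := hsum.1
      linarith
    have hq2 : ∑ i ∈ Iᶜ, qCtr t us μ'' i = 0 := by
      have hpoint : ∀ i ∈ Iᶜ, qCtr t us μ'' i = qCtr t us μ i := by
        intro i hi
        have hii : μ'' i = μ i := by
          rw [hμ'']
          simp [Finset.mem_compl.mp hi]
        unfold qCtr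
        rw [hii]
      rw [Finset.sum_congr rfl hpoint]
      have := hsum.2
      linarith
    have tr2 := SwAux.sub_trans t us μ'' Iᶜ (t - t₁) hm2 hp2 hq2
    have hend : (fun i => if i ∈ Iᶜ then !(μ'' i) else μ'' i) = fun i => !(μ i) := by
      funext i
      by_cases hi : i ∈ I <;> simp [hμ'', Finset.mem_compl, hi]
    rw [hend] at tr2
    exact ⟨swapWord t us μ'', t₁, t - t₁, ht1pos, by omega, by omega, tr1, tr2⟩
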